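/- Let n ≥ 1, let w : Fin n → Fin n → EReal have all entries in {−1, 0, 1, ⊤}, write d = d_w and t*(p,q) = halve(d(p,q)), and define x⁻(k,j) = −∞ if w k j = −1 and x⁻(k,j) = ⊤ otherwise. Fix i, j with d(i,j) finite (an integer). Then (t*(i,j) : EReal) ≤ min over k ∈ Fin n of max(t*(i,k), x⁻(k,j)). -/

import Mathlib

open scoped BigOperators

namespace MinMaxAPSP

/-- `p` is a walk from `i` to `j` with `ℓ` hops in the graph with weight matrix `w`
(an ordered pair is an edge iff its weight is not `⊤`). -/
def IsWalk {n : ℕ} (w : Fin n → Fin n → EReal) (i j : Fin n) (ℓ : ℕ)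
    (p : Fin (ℓ+1) → Fin n) : Prop :=
  p 0 = i ∧ p (Fin.last ℓ) = j ∧ ∀ k : Fin ℓ, w (p k.castSucc) (p k.succ) ≠ ⊤

/-- The weight of a walk with `ℓ` hops. -/
noncomputable def walkWeight {n : ℕ} (w : Fin n → Fin n → EReal) (ℓ : ℕ)
    (p : Fin (ℓ+1) → Fin n) : EReal :=
  ∑ k : Fin ℓ, w (p k.castSucc) (p k.succ)

/-- The distance from `i` to `j`: the infimum of the weights of all walks from `i` to `j`
(`⊤` if there is no walk). -/
noncomputable def dist {n : ℕ} (w : Fin n → Fin n → EReal) (i j : Fin n) : EReal :=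
  sInf {x : EReal | ∃ ℓ, ∃ p : Fin (ℓ+1) → Fin n, IsWalk w i j ℓ p ∧ walkWeight w ℓ p = x}

/-- The infimum of the weights of all walks from `i` to `j` with at most `δ` hops
(`⊤` if there is no such walk). -/
noncomputable def distLE {n : ℕ} (w : Fin n → Fin n → EReal) (δ : ℕ) (i j : Fin n) : EReal :=
  sInf {x : EReal | ∃ ℓ ≤ δ, ∃ p : Fin (ℓ+1) → Fin n, IsWalk w i j ℓ p ∧ walkWeight w ℓ p = x}

/-- `w` is `δ`-regular. -/
def IsRegular {n : ℕ} (w : Fin n → Fin n → EReal) (δ : ℕ) : Prop :=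
  ∀ i j : Fin n,
    (dist w i j ≠ ⊥ → dist w i j = distLE w δ i j) ∧
    (dist w i j = ⊥ →
      ∃ ℓ ≤ δ, ∃ p : Fin (ℓ+1) → Fin n, IsWalk w i j ℓ p ∧ walkWeight w ℓ p < 0)

/-- All entries of `w` are in `{-1, 0, 1, ⊤}`. -/
def EntriesInMinusOneZeroOneTop {n : ℕ} (w : Fin n → Fin n → EReal) : Prop :=
  ∀ i j, w i j = -1 ∨ w i j = 0 ∨ w i j = 1 ∨ w i j = ⊤

/-- `p` is a shortest walk from `i` to `j` under `w`. -/
def IsShortestWalk {n : ℕ} (w : Fin n → Fin n → EReal) (i j : Fin n) (ℓ : ℕ)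
    (p : Fin (ℓ+1) → Fin n) : Prop :=
  IsWalk w i j ℓ p ∧ walkWeight w ℓ p = dist w i j

/-- `wc` is a canonical graph of `w`. -/
def IsCanonical {n : ℕ} (w wc : Fin n → Fin n → EReal) : Prop :=
  EntriesInMinusOneZeroOneTop wc ∧
  ∀ (i j : Fin n) (ℓ : ℕ) (p : Fin (ℓ+1) → Fin n), IsShortestWalk w i j ℓ p →
    ∃ ℓ' ≤ ℓ, ∃ p' : Fin (ℓ'+1) → Fin n,
      IsShortestWalk wc i j ℓ' p' ∧
      walkWeight wc ℓ' p' = walkWeight w ℓ p ∧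
      (ℓ' = 1 ∨ ∀ k : Fin ℓ', wc (p' k.castSucc) (p' k.succ) ≠ 0)

/-- `halve x = ⌈x/2⌉` for finite `x`, and `halve (⊥) = ⊥`, `halve (⊤) = ⊤`. -/
noncomputable def halve (x : EReal) : EReal :=
  if x = ⊤ then ⊤ else if x = ⊥ then ⊥ else (((⌈x.toReal / 2⌉ : ℤ) : ℝ) : EReal)


lemma halve_mono : Monotone halve := by
  intro a b hab
  unfold halve
  by_cases hb1 : b = ⊤
  · simp [hb1]
  by_cases ha2 : a = ⊥
  · simp [ha2]
  have ha1 : a ≠ ⊤ := fun h => hb1 (top_le_iff.mp (h ▸ hab))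
  have hb2 : b ≠ ⊥ := fun h => ha2 (le_bot_iff.mp (h ▸ hab))
  rw [if_neg ha1, if_neg hb1, if_neg ha2, if_neg hb2]
  have h := EReal.toReal_le_toReal hab ha2 hb1
  exact_mod_cast Int.ceil_le_ceil (by linarith)

lemma snoc_walk {n ℓ : ℕ} (w : Fin n → Fin n → EReal) (i k j : Fin n)
    (hkj : w k j ≠ ⊤) (p : Fin (ℓ+1) → Fin n) (hp : IsWalk w i k ℓ p) :
    IsWalk w i j (ℓ+1) (Fin.snoc p j) ∧
      walkWeight w (ℓ+1) (Fin.snoc p j) = walkWeight w ℓ p + w k j := by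
  obtain ⟨h0, hlast, hedge⟩ := hp
  have hcs : ∀ m : Fin (ℓ+1), (Fin.snoc p j : Fin (ℓ+2) → Fin n) m.castSucc = p m :=
    fun m => Fin.snoc_castSucc ..
  have hsucc : ∀ m : Fin ℓ,
      (Fin.snoc p j : Fin (ℓ+2) → Fin n) (m.castSucc).succ = p m.succ := by
    intro m
    rw [Fin.succ_castSucc, Fin.snoc_castSucc]
  have hlastsucc : (Fin.snoc p j : Fin (ℓ+2) → Fin n) ((Fin.last ℓ).succ) = j := by
    rw [Fin.succ_last, Fin.snoc_last]
  constructor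
  · refine ⟨?_, ?_, ?_⟩
    · show (Fin.snoc p j : Fin (ℓ+2) → Fin n) 0 = i
      have : (0 : Fin (ℓ+2)) = (0 : Fin (ℓ+1)).castSucc := rfl
      rw [this, hcs]; exact h0
    · exact Fin.snoc_last ..
    · intro m
      induction m using Fin.lastCases with
      | last => rw [hcs, hlastsucc, hlast]; exact hkj
      | cast m => rw [hcs, hsucc]; exact hedge m
  · unfold walkWeight
    rw [Fin.sum_univ_castSucc]
    congr 1
    · exact Finset.sum_congr rfl fun m _ => by rw [hcs, hsucc]
    · rw [hcs, hlastsucc, hlast]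


/-- `t*(i,j)` lower-bounds the `x⁻` (min,max)-product entry. -/
theorem stmt11 (n : ℕ) (hn : 1 ≤ n) (w : Fin n → Fin n → EReal)
    (hw : EntriesInMinusOneZeroOneTop w)
    (i j : Fin n) (hfin : dist w i j ≠ ⊤ ∧ dist w i j ≠ ⊥) :
    halve (dist w i j) ≤
      ⨅ k : Fin n, max (halve (dist w i k)) (if w k j = -1 then (⊥ : EReal) else ⊤) := by
  refine le_iInf fun k => ?_
  by_cases hkj : w k j = -1
  · rw [if_pos hkj, max_bot_right]
    refine halve_mono ?_
    show dist w i j ≤ dist w i k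
    conv_rhs => rw [dist]
    refine le_sInf fun x hx => ?_
    obtain ⟨ℓ, p, hp, hwt⟩ := hx
    have hne : w k j ≠ ⊤ := by
      simp only [hkj]
      intro h
      have h1 : (1:EReal) = ⊥ := by
        have := congrArg Neg.neg h
        simpa using this
      have : ((1:ℝ):EReal) = ⊥ := by exact_mod_cast h1
      exact EReal.coe_ne_bot 1 this
    obtain ⟨hq, hqw⟩ := snoc_walk w i k j hne p hp
    have hmem : dist w i j ≤ walkWeight w (ℓ+1) (Fin.snoc p j) :=
      sInf_le (α := EReal) ⟨ℓ+1, Fin.snoc p j, hq, rfl⟩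
    calc dist w i j ≤ walkWeight w ℓ p + w k j := hqw ▸ hmem
      _ ≤ walkWeight w ℓ p + 0 := by
          apply add_le_add_right
          rw [hkj]
          have : ((-1:ℝ):EReal) ≤ ((0:ℝ):EReal) := by
            exact_mod_cast (by norm_num : (-1:ℝ) ≤ 0)
          simpa using this
      _ = x := by rw [add_zero, hwt]
  · simp [hkj]


end MinMaxAPSP
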